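/- If $v_0, v_6, v_{12} \ge 0$ and $\sqrt{v_0 v_{12}} \ge (560 + 70\sqrt{70}) v_6$, then the polynomial $f(x_1,x_2,x_3) = v_0 x_1^6 + v_6(x_2^6 + 30 x_1 x_2^4 x_3 + 90 x_1^2 x_2^2 x_3^2 + 20 x_1^3 x_3^3) + v_{12} x_3^6$ is nonnegative for all $(x_1,x_2,x_3) \in \mathbb{R}^3$. -/
import Mathlib


theorem stmt_1 (v0 v6 v12 : ℝ) (hv0 : 0 ≤ v0) (hv6 : 0 ≤ v6) (hv12 : 0 ≤ v12)
    (h : Real.sqrt (v0 * v12) ≥ (560 + 70 * Real.sqrt 70) * v6) :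
    ∀ x1 x2 x3 : ℝ,
      0 ≤ v0 * x1 ^ 6 +
          v6 * (x2 ^ 6 + 30 * x1 * x2 ^ 4 * x3 + 90 * x1 ^ 2 * x2 ^ 2 * x3 ^ 2 +
            20 * x1 ^ 3 * x3 ^ 3) + v12 * x3 ^ 6 := by
  intro x1 x2 x3
  have h70 : Real.sqrt 70 ^ 2 = 70 := Real.sq_sqrt (by norm_num)
  have h8 : (8:ℝ) ≤ Real.sqrt 70 := by
    nlinarith [Real.sqrt_nonneg 70, h70]
  have key : ∀ u s : ℝ, 0 ≤ u → 0 ≤ s →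
      0 ≤ u^3 - 30*s*u^2 + 90*s^2*u + (1100 + 140*Real.sqrt 70)*s^3 := by
    intro u s hu hs
    have hb : 0 ≤ u + (2*Real.sqrt 70 - 10)*s := by nlinarith
    have hid : u^3 - 30*s*u^2 + 90*s^2*u + (1100 + 140*Real.sqrt 70)*s^3
        = (u - (10+Real.sqrt 70)*s)^2 * (u + (2*Real.sqrt 70 - 10)*s) := by
      linear_combination (3*s^2*u - (2*Real.sqrt 70+30)*s^3) * h70
    rw [hid]
    exact mul_nonneg (sq_nonneg _) hb
  have gkey : ∀ u t : ℝ, 0 ≤ u →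
      0 ≤ u^3 + 30*t*u^2 + 90*t^2*u + 20*t^3 + (1120+140*Real.sqrt 70)*|t|^3 := by
    intro u t hu
    rcases le_or_gt 0 t with htp | htn
    · rw [abs_of_nonneg htp]
      have h1 : 0 ≤ t*u^2 := by positivity
      have h2 : 0 ≤ t^2*u := by positivity
      have h3 : 0 ≤ t^3 := by positivity
      nlinarith [Real.sqrt_nonneg 70]
    · have hs : 0 ≤ -t := by linarith
      rw [abs_of_neg htn]
      have hk := key u (-t) hu hs
      nlinarith [hk]
  have hu2 : (0:ℝ) ≤ x2^2 := sq_nonneg x2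
  have gk := gkey (x2^2) (x1*x3) hu2
  -- AM-GM part
  have hA : Real.sqrt v0 ^ 2 = v0 := Real.sq_sqrt hv0
  have hB : Real.sqrt v12 ^ 2 = v12 := Real.sq_sqrt hv12
  have hAB : Real.sqrt (v0*v12) = Real.sqrt v0 * Real.sqrt v12 := Real.sqrt_mul hv0 v12
  have e1 : |x1|^3 * |x1|^3 = x1^6 := by
    rw [show |x1|^3 * |x1|^3 = |x1|^6 by ring]
    rw [← abs_pow]
    exact abs_of_nonneg (by positivity)
  have e3 : |x3|^3 * |x3|^3 = x3^6 := by
    rw [show |x3|^3 * |x3|^3 = |x3|^6 by ring]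
    rw [← abs_pow]
    exact abs_of_nonneg (by positivity)
  have e13 : |x1*x3|^3 = |x1|^3 * |x3|^3 := by rw [abs_mul]; ring
  have amgm : 2 * Real.sqrt (v0*v12) * |x1*x3|^3 ≤ v0*x1^6 + v12*x3^6 := by
    rw [hAB, e13]
    nlinarith [sq_nonneg (Real.sqrt v0 * |x1|^3 - Real.sqrt v12 * |x3|^3), e1, e3,
      hA, hB]
  have habs : (0:ℝ) ≤ |x1*x3|^3 := by positivity
  have hchain : (1120 + 140*Real.sqrt 70) * v6 * |x1*x3|^3
      ≤ 2 * Real.sqrt (v0*v12) * |x1*x3|^3 := by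
    have : (1120 + 140*Real.sqrt 70) * v6 ≤ 2 * Real.sqrt (v0*v12) := by linarith
    exact mul_le_mul_of_nonneg_right this habs
  have hvg := mul_nonneg hv6 gk
  nlinarith [hvg, amgm, hchain]
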